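/- For every integer r ≥ 2, the group cohomology H¹((ℤ/2^rℤ)^×, ℤ/2^rℤ), where the unit group (ℤ/2^rℤ)^× acts on ℤ/2^rℤ by multiplication, is isomorphic to ℤ/2ℤ. Equivalently, H¹(Gal(ℚ(ζ_{2^r})/ℚ), μ_{2^r}) ≅ ℤ/2ℤ. -/

import Mathlib

/-!
Here `(ℤ/2^rℤ)ˣ` acts on the additive group `ℤ/2^rℤ` by multiplication; this is precisely
the action of `Gal(ℚ(ζ_{2^r})/ℚ)` on `μ_{2^r}` under the canonical identifications
`Gal(ℚ(ζ_{2^r})/ℚ) ≅ (ℤ/2^rℤ)ˣ` and `μ_{2^r} ≅ ℤ/2^rℤ`. The corresponding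
`ℤ`-linear representation is `Rep.ofDistribMulAction ℤ (ZMod (2 ^ r))ˣ (ZMod (2 ^ r))`,
and `groupCohomology.H1` is its first group cohomology.
-/


open Finset groupCohomology

namespace H1ZMod

/-- Key elementary fact: `5 ^ (2 ^ k) = 1 + 2 ^ (k + 2) * u` with `u` odd. -/
lemma five_pow_two_pow (k : ℕ) : ∃ u : ℕ, Odd u ∧ 5 ^ (2 ^ k) = 1 + 2 ^ (k + 2) * u := by
  induction k with
  | zero => exact ⟨1, odd_one, by norm_num⟩
  | succ k ih =>
    obtain ⟨u, hu, h⟩ := ih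
    refine ⟨u + 2 ^ (k + 1) * u ^ 2, hu.add_even (Even.mul_right ⟨2 ^ k, by ring⟩ _), ?_⟩
    have : 5 ^ 2 ^ (k + 1) = (5 ^ 2 ^ k) ^ 2 := by rw [pow_succ, pow_mul]
    rw [this, h]
    ring

variable (s : ℕ)

local notation "n" => 2 ^ (s + 2)

lemma hnz : (2 : ℕ) ^ (s + 2) ≠ 0 := by positivity

lemma hzero : ((2 : ZMod n)) ^ (s + 2) = 0 := by
  have := ZMod.natCast_self n
  push_cast at this
  exact this

lemma coprime5 : Nat.Coprime 5 n := Nat.Coprime.pow_right _ (by decide)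

/-- `5` as a unit mod `2 ^ (s + 2)`. -/
def u5 : (ZMod n)ˣ := ZMod.unitOfCoprime 5 (coprime5 s)

lemma u5_val : ((u5 s : (ZMod n)ˣ) : ZMod n) = 5 := by
  have := ZMod.coe_unitOfCoprime 5 (coprime5 s)
  push_cast at this
  exact this

lemma five_pow_order : (5 : ZMod n) ^ (2 ^ s) = 1 := by
  obtain ⟨u, -, h⟩ := five_pow_two_pow s
  have : ((5 ^ 2 ^ s : ℕ) : ZMod n) = ((1 + 2 ^ (s + 2) * u : ℕ) : ZMod n) := by rw [h]
  push_cast at this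
  rw [this, hzero]
  ring

lemma u5_pow_order : (u5 s) ^ (2 ^ s) = 1 := by
  ext
  push_cast [u5_val]
  exact five_pow_order s

lemma two_pow_mul_ne_zero {u j : ℕ} (hu : Odd u) (hj : j < s + 2) :
    ((2 ^ j * u : ℕ) : ZMod n) ≠ 0 := by
  rw [Ne, ZMod.natCast_eq_zero_iff]
  intro hdvd
  have hsplit : (2 : ℕ) ^ (s + 2) = 2 ^ j * 2 ^ (s + 2 - j) := by
    rw [← pow_add]; congr 1; omega
  rw [hsplit] at hdvd
  have h2 : 2 ^ (s + 2 - j) ∣ u := (mul_dvd_mul_iff_left (a := (2:ℕ) ^ j) (by positivity)).1 hdvd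
  have : (2 : ℕ) ∣ u := dvd_trans (dvd_pow_self 2 (by omega : s + 2 - j ≠ 0)) h2
  rw [Nat.odd_iff] at hu
  omega

lemma orderOf_u5 : orderOf (u5 s) = 2 ^ s := by
  have hdvd : orderOf (u5 s) ∣ 2 ^ s := orderOf_dvd_of_pow_eq_one (u5_pow_order s)
  obtain ⟨j, hj, hoj⟩ := (Nat.dvd_prime_pow Nat.prime_two).1 hdvd
  rcases eq_or_lt_of_le hj with rfl | hlt
  · exact hoj
  · exfalso
    obtain ⟨u, hu, h⟩ := five_pow_two_pow j
    have h1 : (5 : ZMod n) ^ (2 ^ j) = 1 := by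
      have := pow_orderOf_eq_one (u5 s)
      rw [hoj] at this
      have := congrArg (Units.val) this
      push_cast [u5_val] at this
      exact this
    have : ((5 ^ 2 ^ j : ℕ) : ZMod n) = ((1 + 2 ^ (j + 2) * u : ℕ) : ZMod n) := by rw [h]
    push_cast at this
    rw [h1] at this
    have h0 : ((2 ^ (j + 2) * u : ℕ) : ZMod n) = 0 := by
      push_cast
      linear_combination -this
    exact two_pow_mul_ne_zero s hu (by omega) h0

local notation "G" => (ZMod n)ˣ

/-- reduction mod 4 -/
def c4 : ZMod n →+* ZMod 4 := ZMod.castHom (show (4:ℕ) ∣ 2 ^ (s + 2) from ⟨2 ^ s, by ring⟩) (ZMod 4)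

lemma c4_five : c4 s (5 : ZMod n) = 1 := by
  have : ((5 : ℕ) : ZMod n) = (5 : ZMod n) := by push_cast; rfl
  rw [← this, map_natCast]
  decide

lemma c4_unit (g : G) : c4 s (g : ZMod n) = 1 ∨ c4 s (g : ZMod n) = 3 := by
  have h : IsUnit (c4 s (g : ZMod n)) := (Units.isUnit g).map (c4 s)
  have : ∀ x : ZMod 4, IsUnit x → x = 1 ∨ x = 3 := by decide
  exact this _ h

lemma card_G : Fintype.card G = 2 ^ (s + 1) := by
  rw [ZMod.card_units_eq_totient, Nat.totient_prime_pow Nat.prime_two (by omega)]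
  simp

lemma emb_bij : Function.Bijective (fun p : ZMod 2 × ZMod (2 ^ s) =>
    ((-1) ^ p.1.val * (u5 s) ^ p.2.val : G)) := by
  rw [Fintype.bijective_iff_injective_and_card]
  constructor
  · rintro ⟨a, k⟩ ⟨b, l⟩ h
    simp only at h
    have hval := congrArg (fun x : G => c4 s (x : ZMod n)) h
    simp only [Units.val_mul, Units.val_pow_eq_pow_val, Units.val_neg, Units.val_one,
      map_mul, map_pow, map_neg, map_one, u5_val, c4_five, one_pow, mul_one] at hval
    have hab : a = b := by
      have h2 : ∀ x y : ZMod 2, (-1 : ZMod 4) ^ x.val = (-1) ^ y.val → x = y := by decide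
      exact h2 a b hval
    subst hab
    have hk : (u5 s) ^ k.val = (u5 s) ^ l.val := by
      exact mul_left_cancel h
    rw [pow_eq_pow_iff_modEq, orderOf_u5] at hk
    have : k.val = l.val := by
      have h1 := ZMod.val_lt k
      have h2 := ZMod.val_lt l
      rwa [Nat.ModEq, Nat.mod_eq_of_lt h1, Nat.mod_eq_of_lt h2] at hk
    exact Prod.ext rfl (ZMod.val_injective _ this)
  · rw [Fintype.card_prod, ZMod.card, ZMod.card, card_G]; ring

lemma units_eq_pm_u5_pow (g : G) : ∃ k : ℕ, g = (u5 s) ^ k ∨ g = -(u5 s) ^ k := by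
  obtain ⟨⟨a, k⟩, hp⟩ := (emb_bij s).2 g
  simp only at hp
  refine ⟨k.val, ?_⟩
  have hlt := ZMod.val_lt a
  have : a.val = 0 ∨ a.val = 1 := by omega
  rcases this with h | h <;> rw [h] at hp
  · left; rw [← hp, pow_zero, one_mul]
  · right; rw [← hp, pow_one, neg_one_mul]

lemma four_mul_two_pow : (4 : ZMod n) * 2 ^ s = 0 := by
  have h := hzero s
  calc (4 : ZMod n) * 2 ^ s = 2 ^ (s + 2) := by ring
  _ = 0 := h

lemma c4_neg_one : c4 s (((-1 : G) : ZMod n)) = 3 := by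
  rw [Units.val_neg, Units.val_one, map_neg, map_one]
  decide

lemma natcast_mul_two_pow (v : ℕ) :
    ((v : ℕ) : ZMod n) * 2 ^ s = ((v % 4 : ℕ) : ZMod n) * 2 ^ s := by
  conv_lhs => rw [← Nat.div_add_mod v 4]
  push_cast
  linear_combination ((v / 4 : ℕ) : ZMod n) * four_mul_two_pow s

lemma mul_two_pow_s (y : ZMod n) : y * 2 ^ s = ((c4 s y).val : ZMod n) * 2 ^ s := by
  have hy : ((y.val : ℕ) : ZMod n) = y := ZMod.natCast_zmod_val y
  have hc : (c4 s y).val = y.val % 4 := by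
    conv_lhs => rw [← hy]
    rw [map_natCast, ZMod.val_natCast]
  rw [hc]
  conv_lhs => rw [← hy]
  exact natcast_mul_two_pow s y.val

lemma div4 (x : ZMod n) (h : (2 : ZMod n) ^ s * x = 0) : ∃ a : ZMod n, x = 4 * a := by
  have hx : ((x.val : ℕ) : ZMod n) = x := ZMod.natCast_zmod_val x
  have h' : ((2 ^ s * x.val : ℕ) : ZMod n) = 0 := by push_cast [hx]; exact h
  rw [ZMod.natCast_eq_zero_iff] at h'
  have h4 : 4 ∣ x.val := by
    have : (2:ℕ) ^ s * 4 ∣ 2 ^ s * x.val := by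
      rw [show (2:ℕ) ^ s * 4 = 2 ^ (s + 2) by ring]; exact h'
    exact (mul_dvd_mul_iff_left (a := (2:ℕ) ^ s) (by positivity)).1 this
  refine ⟨((x.val / 4 : ℕ) : ZMod n), ?_⟩
  conv_lhs => rw [← hx]
  have : x.val = 4 * (x.val / 4) := (Nat.mul_div_cancel' h4).symm
  calc ((x.val : ℕ) : ZMod n) = ((4 * (x.val / 4) : ℕ) : ZMod n) := by rw [← this]
    _ = 4 * ((x.val / 4 : ℕ) : ZMod n) := by push_cast; ring

lemma two_mul_zero (x : ZMod n) (h : 2 * x = 0) : x = 0 ∨ x = 2 ^ (s + 1) := by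
  have hx : ((x.val : ℕ) : ZMod n) = x := ZMod.natCast_zmod_val x
  have h' : ((2 * x.val : ℕ) : ZMod n) = 0 := by push_cast [hx]; exact h
  rw [ZMod.natCast_eq_zero_iff] at h'
  have h2 : 2 ^ (s + 1) ∣ x.val := by
    have : (2:ℕ) * 2 ^ (s + 1) ∣ 2 * x.val := by
      rw [show (2:ℕ) * 2 ^ (s + 1) = 2 ^ (s + 2) by ring]; exact h'
    exact (mul_dvd_mul_iff_left (a := (2:ℕ)) (by norm_num)).1 this
  obtain ⟨c, hc⟩ := h2
  have hlt : x.val < 2 ^ (s + 2) := ZMod.val_lt x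
  have hc2 : c < 2 := by
    by_contra hcon
    push_neg at hcon
    have : 2 ^ (s + 1) * 2 ≤ 2 ^ (s + 1) * c := Nat.mul_le_mul_left _ hcon
    rw [show (2:ℕ) ^ (s+1) * 2 = 2 ^ (s+2) by ring] at this
    omega
  interval_cases c
  · left; rw [← hx, hc]; push_cast; ring
  · right; rw [← hx, hc]; push_cast; ring

lemma two_pow_succ_ne_zero : (2 : ZMod n) ^ (s + 1) ≠ 0 := by
  have : ((2 ^ (s + 1) : ℕ) : ZMod n) ≠ 0 := by
    rw [Ne, ZMod.natCast_eq_zero_iff]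
    intro h
    have := Nat.le_of_dvd (by positivity) h
    have h2 : (2:ℕ) ^ (s + 1) < 2 ^ (s + 2) := Nat.pow_lt_pow_right (by norm_num) (by omega)
    omega
  push_cast at this
  exact this

noncomputable abbrev Amod : Rep ℤ G := Rep.ofDistribMulAction ℤ (ZMod n)ˣ (ZMod n)

def ev (f : cocycles₁ (Amod s)) : G → ZMod n := f.1

lemma ev_add (f g : cocycles₁ (Amod s)) : ev s (f + g) = ev s f + ev s g := rfl
lemma ev_smul (z : ℤ) (f : cocycles₁ (Amod s)) : ev s (z • f) = z • ev s f := rfl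

lemma ev_cocycle (f : cocycles₁ (Amod s)) : IsCocycle₁ (A := ZMod n) (ev s f) :=
  isCocycle₁_of_mem_cocycles₁ _ f.2

lemma ev_rel (f : cocycles₁ (Amod s)) (g h : G) :
    ev s f (g * h) = (g : ZMod n) * ev s f h + ev s f g := by
  have := ev_cocycle s f g h
  rwa [Units.smul_def, smul_eq_mul] at this

lemma ev_one (f : cocycles₁ (Amod s)) : ev s f 1 = 0 :=
  map_one_of_isCocycle₁ (ev_cocycle s f)

/-- The linear functional `f ↦ 2 f(-1) + f(5)` on 1-cocycles. -/
noncomputable def L : cocycles₁ (Amod s) →ₗ[ℤ] ZMod n where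
  toFun f := 2 * ev s f (-1) + ev s f (u5 s)
  map_add' f g := by simp only [ev_add, Pi.add_apply]; ring
  map_smul' z f := by
    simp only [ev_smul, Pi.smul_apply, RingHom.id_apply, zsmul_eq_mul]
    ring

lemma two_mul_L (f : cocycles₁ (Amod s)) : 2 * L s f = 0 := by
  have h1 := ev_rel s f (-1) (u5 s)
  have h2 := ev_rel s f (u5 s) (-1)
  rw [mul_comm] at h1
  rw [h1] at h2
  simp only [Units.val_neg, Units.val_one, u5_val] at h2
  show 2 * (2 * ev s f (-1) + ev s f (u5 s)) = 0
  linear_combination -h2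

lemma ev_u5_pow (f : cocycles₁ (Amod s)) (k : ℕ) :
    ev s f ((u5 s) ^ k) = (∑ i ∈ range k, (5 : ZMod n) ^ i) * ev s f (u5 s) := by
  induction k with
  | zero => simpa using ev_one s f
  | succ k ih =>
    rw [pow_succ' (u5 s) k, ev_rel s f (u5 s) ((u5 s) ^ k), ih, u5_val, geom_sum_succ]
    ring

lemma norm_rel (f : cocycles₁ (Amod s)) : (2 : ZMod n) ^ s * ev s f (u5 s) = 0 := by
  obtain ⟨u, hu, h5⟩ := five_pow_two_pow s
  -- the geometric sum `∑_{i<2^s} 5^i` equals `2^s * u` as an integer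
  have hZ : (∑ i ∈ range (2 ^ s), (5 : ℤ) ^ i) = 2 ^ s * u := by
    have h4 : (∑ i ∈ range (2 ^ s), (5 : ℤ) ^ i) * 4 = (2 ^ s * u) * 4 := by
      have := geom_sum_mul (5 : ℤ) (2 ^ s)
      have h5' : (5 : ℤ) ^ 2 ^ s = 1 + 2 ^ (s + 2) * u := by exact_mod_cast congrArg (Nat.cast : ℕ → ℤ) h5
      rw [h5'] at this
      norm_num at this
      linear_combination this
    exact mul_right_cancel₀ (by norm_num) h4
  have hsum : (∑ i ∈ range (2 ^ s), (5 : ZMod n) ^ i) = ((2 ^ s * u : ℤ) : ZMod n) := by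
    rw [← hZ]; push_cast; rfl
  have h1 := ev_u5_pow s f (2 ^ s)
  rw [u5_pow_order, ev_one, hsum] at h1
  have hunit : IsUnit ((u : ℕ) : ZMod n) := by
    rw [ZMod.isUnit_iff_coprime]
    exact Nat.Coprime.pow_right _ (Nat.coprime_two_right.2 hu)
  have h2 : ((u : ℕ) : ZMod n) * ((2 : ZMod n) ^ s * ev s f (u5 s)) = 0 := by
    push_cast at h1 ⊢
    linear_combination -h1
  rcases hunit.mul_right_eq_zero.1 h2 with h3
  exact h3

lemma ev_neg_one_mul (f : cocycles₁ (Amod s)) (g : G) :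
    ev s f (-g) = -(ev s f g) + ev s f (-1) := by
  have := ev_rel s f (-1) g
  rwa [neg_one_mul, Units.val_neg, Units.val_one, neg_one_mul] at this

lemma mem_coboundaries_iff (f : cocycles₁ (Amod s)) :
    ⇑f ∈ coboundaries₁ (Amod s) ↔ L s f = 0 := by
  constructor
  · intro hf
    obtain ⟨x, hx⟩ := isCoboundary₁_of_mem_coboundaries₁ (A := ZMod n) _ hf
    simp only [Units.smul_def, smul_eq_mul] at hx
    have h1 := hx (-1)
    have h2 := hx (u5 s)
    rw [Units.val_neg, Units.val_one] at h1
    rw [u5_val] at h2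
    show 2 * ev s f (-1) + ev s f (u5 s) = 0
    have e1 : ev s f (-1) = -1 * x - x := h1.symm
    have e2 : ev s f (u5 s) = 5 * x - x := h2.symm
    rw [e1, e2]; ring
  · intro hL
    replace hL : 2 * ev s f (-1) + ev s f (u5 s) = 0 := hL
    obtain ⟨a, ha⟩ := div4 s _ (norm_rel s f)
    have h2 : 2 * (ev s f (-1) + 2 * a) = 0 := by
      rw [ha] at hL; linear_combination hL
    -- find `m` with `f(5) = 4m` and `f(-1) = -2m`
    obtain ⟨m, hm1, hm2⟩ : ∃ m : ZMod n, ev s f (u5 s) = 4 * m ∧ ev s f (-1) = -(2 * m) := by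
      rcases two_mul_zero s _ h2 with h | h
      · exact ⟨a, ha, by linear_combination h⟩
      · exact ⟨a - 2 ^ s, by rw [ha]; linear_combination four_mul_two_pow s,
          by linear_combination h⟩
    have hpow : ∀ k : ℕ, ev s f ((u5 s) ^ k) = 5 ^ k * m - m := by
      intro k
      induction k with
      | zero => rw [pow_zero, ev_one]; ring
      | succ k ih =>
        rw [pow_succ' (u5 s) k, ev_rel s f (u5 s) ((u5 s) ^ k), ih, u5_val, hm1]
        ring
    have hco : ∀ g : G, (g : ZMod n) * m - m = ev s f g := by
      intro g
      obtain ⟨k, rfl | rfl⟩ := units_eq_pm_u5_pow s g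
      · rw [hpow, Units.val_pow_eq_pow_val, u5_val]
      · rw [ev_neg_one_mul, hpow, hm2, Units.val_neg, Units.val_pow_eq_pow_val, u5_val]
        ring
    have hIs : IsCoboundary₁ (A := ZMod n) (ev s f) :=
      ⟨m, fun g => by rw [Units.smul_def, smul_eq_mul]; exact hco g⟩
    have heq : ⇑f = (coboundariesOfIsCoboundary₁ hIs).1 := rfl
    rw [heq]
    exact (coboundariesOfIsCoboundary₁ hIs).2

/-- The explicit 1-cocycle generating `H¹`: `g ↦ 0` if `g ≡ 1 (mod 4)`, else `2 ^ s`. -/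
def phi (g : G) : ZMod n := if c4 s (g : ZMod n) = 1 then 0 else 2 ^ s

lemma phi_eq_zero {g : G} (hg : c4 s (g : ZMod n) = 1) : phi s g = 0 := by
  unfold phi; simp [hg]

lemma phi_eq_pow {g : G} (hg : c4 s (g : ZMod n) = 3) : phi s g = 2 ^ s := by
  unfold phi; simp [hg, show (3 : ZMod 4) ≠ 1 by decide]

lemma phi_cocycle : IsCocycle₁ (A := ZMod n) (phi s) := by
  intro g h
  rw [Units.smul_def, smul_eq_mul]
  have hmul : c4 s ((g * h : G) : ZMod n) = c4 s (g : ZMod n) * c4 s (h : ZMod n) := by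
    rw [Units.val_mul, map_mul]
  have hg2 : (g : ZMod n) * 2 ^ s = ((c4 s ((g : ZMod n))).val : ZMod n) * 2 ^ s :=
    mul_two_pow_s s _
  have v1 : ((1 : ZMod 4).val : ZMod n) = 1 := by rw [show (1 : ZMod 4).val = 1 by decide]; norm_num
  have v3 : ((3 : ZMod 4).val : ZMod n) = 3 := by rw [show (3 : ZMod 4).val = 3 by decide]; norm_num
  rcases c4_unit s g with hg | hg <;> rcases c4_unit s h with hh | hh
  · rw [phi_eq_zero s hg, phi_eq_zero s hh,
      phi_eq_zero s (g := g * h) (by rw [hmul, hg, hh, one_mul])]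
    ring
  · rw [phi_eq_zero s hg, phi_eq_pow s hh,
      phi_eq_pow s (g := g * h) (by rw [hmul, hg, hh, one_mul]), hg2, hg, v1]
    ring
  · rw [phi_eq_pow s hg, phi_eq_zero s hh,
      phi_eq_pow s (g := g * h) (by rw [hmul, hg, hh, mul_one])]
    ring
  · rw [phi_eq_pow s hg, phi_eq_pow s hh,
      phi_eq_zero s (g := g * h) (by rw [hmul, hg, hh]; decide), hg2, hg, v3]
    linear_combination -four_mul_two_pow s

/-- `phi` as an element of the 1-cocycles. -/
noncomputable def f0 : cocycles₁ (Amod s) := cocyclesOfIsCocycle₁ (phi_cocycle s)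

lemma L_f0 : L s (f0 s) = 2 ^ (s + 1) := by
  have hev : ev s (f0 s) = phi s := rfl
  show 2 * ev s (f0 s) (-1) + ev s (f0 s) (u5 s) = 2 ^ (s + 1)
  rw [hev]
  unfold phi
  rw [c4_neg_one, u5_val, c4_five, if_neg (by decide), if_pos rfl]
  ring

/-- `H1π` as a linear map out of `cocycles₁`. -/
noncomputable def piH : cocycles₁ (Amod s) →ₗ[ℤ] H1 (Amod s) where
  toFun x := (H1π (Amod s)).hom x
  map_add' x y := (H1π (Amod s)).hom.map_add x y
  map_smul' z x := (H1π (Amod s)).hom.map_smul z x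

lemma ker_L : LinearMap.ker (piH s) = LinearMap.ker (L s) := by
  ext f
  rw [LinearMap.mem_ker, LinearMap.mem_ker]
  exact (H1π_eq_zero_iff f).trans (mem_coboundaries_iff s f)

lemma range_L : LinearMap.range (L s) = Submodule.span ℤ {(2 : ZMod n) ^ (s + 1)} := by
  apply le_antisymm
  · rintro y ⟨f, rfl⟩
    rcases two_mul_zero s _ (two_mul_L s f) with h | h <;> rw [h]
    · exact Submodule.zero_mem _
    · exact Submodule.mem_span_singleton_self _
  · rw [Submodule.span_le, Set.singleton_subset_iff]
    exact ⟨f0 s, L_f0 s⟩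

noncomputable def spanEquiv : ZMod 2 ≃+ Submodule.span ℤ {(2 : ZMod n) ^ (s + 1)} := by
  set x0 : ZMod n := (2 : ZMod n) ^ (s + 1) with hx0
  set elt : Submodule.span ℤ {x0} := ⟨x0, Submodule.mem_span_singleton_self x0⟩ with helt
  have hf2 : (LinearMap.toSpanSingleton ℤ (Submodule.span ℤ {x0}) elt).toAddMonoidHom
      (2 : ℤ) = 0 := by
    apply Subtype.ext
    show (2 : ℤ) • x0 = 0
    rw [zsmul_eq_mul]
    push_cast
    calc (2 : ZMod n) * 2 ^ (s + 1) = 2 ^ (s + 2) := by ring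
    _ = 0 := hzero s
  set h2 : ZMod 2 →+ Submodule.span ℤ {x0} := ZMod.lift 2 ⟨_, hf2⟩ with hh2
  have hcoe : ∀ z : ℤ, h2 ((z : ℤ) : ZMod 2) = z • elt := fun z => ZMod.lift_coe 2 _ z
  refine AddEquiv.ofBijective h2 ⟨(injective_iff_map_eq_zero h2).2 ?_, ?_⟩
  · intro y hy
    have hcases : ∀ y : ZMod 2, y = 0 ∨ y = 1 := by decide
    rcases hcases y with rfl | rfl
    · rfl
    · exfalso
      have h1 : ((1 : ℤ) : ZMod 2) = 1 := by norm_num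
      rw [← h1, hcoe 1, one_smul] at hy
      exact two_pow_succ_ne_zero s (by simpa [helt, Subtype.ext_iff] using hy)
  · intro y
    obtain ⟨z, hz⟩ := Submodule.mem_span_singleton.1 y.2
    refine ⟨((z : ℤ) : ZMod 2), ?_⟩
    rw [hcoe z]
    apply Subtype.ext
    show z • x0 = (y : ZMod n)
    exact hz

theorem main : Nonempty (groupCohomology.H1 (Amod s) ≃+ ZMod 2) := by
  have e1 : groupCohomology.H1 (Amod s) ≃ₗ[ℤ]
      (cocycles₁ (Amod s) ⧸ LinearMap.ker (L s)) :=
    ((Submodule.quotEquivOfEq _ _ (ker_L s)).symm.trans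
      (LinearMap.quotKerEquivOfSurjective (piH s)
        ((ModuleCat.epi_iff_surjective (H1π (Amod s))).1 inferInstance))).symm
  have e2 := (L s).quotKerEquivRange
  have e3 := LinearEquiv.ofEq _ _ (range_L s)
  exact ⟨(((e1.trans e2).trans e3).toAddEquiv).trans (spanEquiv s).symm⟩

end H1ZMod

/-- For every `r ≥ 2`, the group cohomology `H¹((ℤ/2^rℤ)ˣ, ℤ/2^rℤ)`, with the unit group
acting by multiplication, is isomorphic to `ℤ/2ℤ`; equivalently,
`H¹(Gal(ℚ(ζ_{2^r})/ℚ), μ_{2^r}) ≅ ℤ/2ℤ`. -/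
theorem h1_units_zmod_two_pow (r : ℕ) (hr : 2 ≤ r) :
    Nonempty (groupCohomology.H1
      (Rep.ofDistribMulAction ℤ (ZMod (2 ^ r))ˣ (ZMod (2 ^ r))) ≃+ ZMod 2) := by
  obtain ⟨s, rfl⟩ : ∃ s, r = s + 2 := ⟨r - 2, by omega⟩
  exact H1ZMod.main s
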